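/- Let ε > 0 and let y ∈ c₀₀ with ‖y‖ = 1 and ‖y‖_{ℓ∞} ≤ ε/2. Suppose y = y₁ + y₂ + ⋯ + y_ℓ where y₁ < y₂ < ⋯ < y_ℓ in c₀₀, ‖y_i‖ ≤ ε for all 1 ≤ i ≤ ℓ, and ‖y_i‖ ≥ ε/2 for all 1 ≤ i ≤ ℓ − 1. Then ((ℓ−1)/f(ℓ))·(ε/2) ≤ 1 and 1 ≤ ℓ·ε. -/

import Mathlib

abbrev c00 : Type := ℕ →₀ ℝ

noncomputable def flog (x : ℝ) : ℝ := Real.logb 2 (x + 1)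

noncomputable def supNorm (x : c00) : ℝ := ⨆ i, |x i|

def proj (E : Finset ℕ) (x : c00) : c00 := x.filter (· ∈ E)

def FLt (A B : Finset ℕ) : Prop := ∀ a ∈ A, ∀ b ∈ B, a < b

def IsNormC00 (N : c00 → ℝ) : Prop :=
  (∀ x, N x = 0 ↔ x = 0) ∧ (∀ x y, N (x + y) ≤ N x + N y) ∧
    ∀ (a : ℝ) (x : c00), N (a • x) = |a| * N x

def schSet (N : c00 → ℝ) (x : c00) : Set ℝ :=
  {s | ∃ n : ℕ, 2 ≤ n ∧ ∃ E : Fin n → Finset ℕ,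
    (∀ i j : Fin n, i < j → FLt (E i) (E j)) ∧
    s = (flog n)⁻¹ * ∑ i, N (proj (E i) x)}

def IsSchlumprechtNorm (N : c00 → ℝ) : Prop :=
  IsNormC00 N ∧ ∀ x : c00, IsLUB (insert (supNorm x) (schSet N x)) (N x)

def IsBlockSeq (x : ℕ → c00) : Prop :=
  (∀ n, x n ≠ 0) ∧ ∀ n, ∀ i ∈ (x n).support, ∀ j ∈ (x (n+1)).support, i < j

def SeqEquiv (N : c00 → ℝ) (u v : ℕ → c00) : Prop :=
  ∃ c : ℝ, 1 ≤ c ∧ ∀ a : ℕ →₀ ℝ,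
    (1 / c) * N (a.sum fun i t => t • u i) ≤ N (a.sum fun i t => t • v i) ∧
    N (a.sum fun i t => t • v i) ≤ c * N (a.sum fun i t => t • u i)

/-- the splitting estimate for a norm-one vector `y` with
`‖y‖_{ℓ∞} ≤ ε/2` decomposed as `y = y₁ + ⋯ + y_ℓ` with `y₁ < ⋯ < y_ℓ`,
`‖yᵢ‖ ≤ ε` for all `i` and `‖yᵢ‖ ≥ ε/2` for `i ≤ ℓ - 1`. -/
theorem splitting_estimate
    (N : c00 → ℝ) (hN : IsSchlumprechtNorm N)
    (ε : ℝ) (hε : 0 < ε)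
    (y : c00) (hy : N y = 1) (hysup : supNorm y ≤ ε / 2)
    (l : ℕ) (ys : Fin l → c00)
    (hsum : y = ∑ i, ys i)
    (hblock : ∀ i j : Fin l, i < j →
      ∀ a ∈ (ys i).support, ∀ b ∈ (ys j).support, a < b)
    (hupper : ∀ i : Fin l, N (ys i) ≤ ε)
    (hlower : ∀ i : Fin l, (i : ℕ) + 1 < l → ε / 2 ≤ N (ys i)) :
    ((l : ℝ) - 1) / flog l * (ε / 2) ≤ 1 ∧ 1 ≤ (l : ℝ) * ε := by
  classical
  obtain ⟨⟨hzero, hadd, hsmul⟩, hlub⟩ := hN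
  have hN0 : N 0 = 0 := (hzero 0).mpr rfl
  have hNneg : ∀ x, 0 ≤ N x := by
    intro x
    have h2 : N ((-1:ℝ) • x) = N x := by rw [hsmul]; simp
    have h3 : x + (-1:ℝ) • x = 0 := by simp
    have h1 : N (x + (-1 : ℝ) • x) ≤ N x + N ((-1:ℝ) • x) := hadd _ _
    rw [h3, hN0, h2] at h1
    linarith
  have hsub : ∀ (s : Finset (Fin l)), N (∑ i ∈ s, ys i) ≤ ∑ i ∈ s, N (ys i) := by
    intro s
    induction s using Finset.induction with
    | empty => simp [hN0]
    | insert _ _ hx ih =>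
      rename_i a s'
      rw [Finset.sum_insert hx, Finset.sum_insert hx]
      exact le_trans (hadd _ _) (by linarith)
  have part2 : 1 ≤ (l : ℝ) * ε := by
    calc (1:ℝ) = N y := hy.symm
      _ ≤ ∑ i, N (ys i) := by rw [hsum]; exact hsub _
      _ ≤ ∑ _i : Fin l, ε := Finset.sum_le_sum fun i _ => hupper i
      _ = (l : ℝ) * ε := by simp [mul_comm]
  refine ⟨?_, part2⟩
  by_cases h2 : 2 ≤ l
  · -- main case
    have hproj : ∀ i : Fin l, proj ((ys i).support) y = ys i := by
      intro i
      ext a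
      rw [proj, Finsupp.filter_apply]
      by_cases ha : a ∈ (ys i).support
      · simp only [ha, if_pos]
        rw [hsum, Finsupp.finset_sum_apply]
        refine Finset.sum_eq_single i ?_ (by simp)
        intro j _ hji
        by_contra hja
        have hja' : a ∈ (ys j).support := Finsupp.mem_support_iff.mpr hja
        rcases lt_or_gt_of_ne hji with h | h
        · exact lt_irrefl a (hblock j i h a hja' a ha)
        · exact lt_irrefl a (hblock i j h a ha a hja')
      · simp only [ha, if_neg, not_false_iff]
        exact (Finsupp.notMem_support_iff.mp ha).symm
    have hflogpos : 0 < flog l := by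
      apply Real.logb_pos (by norm_num)
      have : (2:ℝ) ≤ (l:ℝ) := by exact_mod_cast h2
      linarith
    have hmem : ((flog l)⁻¹ * ∑ i, N (proj ((ys i).support) y)) ∈ schSet N y :=
      ⟨l, h2, fun i => (ys i).support, fun i j h => hblock i j h, rfl⟩
    have hub : (flog l)⁻¹ * ∑ i, N (proj ((ys i).support) y) ≤ 1 := by
      have := (hlub y).1 (Set.mem_insert_of_mem _ hmem)
      rwa [hy] at this
    have hsumeq : ∑ i, N (proj ((ys i).support) y) = ∑ i, N (ys i) :=
      Finset.sum_congr rfl fun i _ => by rw [hproj i]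
    rw [hsumeq] at hub
    -- lower bound on the sum
    have hlast : l - 1 < l := by omega
    have hSeq : Finset.univ.filter (fun i : Fin l => (i:ℕ)+1 < l)
        = Finset.univ.erase ⟨l-1, hlast⟩ := by
      ext i
      simp only [Finset.mem_filter, Finset.mem_erase, Finset.mem_univ, true_and, and_true]
      constructor
      · intro h hEq
        rw [hEq] at h; simp at h; omega
      · intro h
        have : (i : ℕ) ≠ l - 1 := fun hc => h (Fin.ext hc)
        omega
    have hcard : (Finset.univ.filter (fun i : Fin l => (i:ℕ)+1 < l)).card = l - 1 := by
      rw [hSeq, Finset.card_erase_of_mem (Finset.mem_univ _), Finset.card_univ, Fintype.card_fin]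
    have hlowsum : ((l : ℝ) - 1) * (ε / 2) ≤ ∑ i, N (ys i) := by
      have hsub1 : ∑ i ∈ Finset.univ.filter (fun i : Fin l => (i:ℕ)+1 < l), N (ys i)
          ≤ ∑ i, N (ys i) :=
        Finset.sum_le_sum_of_subset_of_nonneg (Finset.filter_subset _ _)
          (fun i _ _ => hNneg _)
      have hsub2 : ((l:ℝ) - 1) * (ε/2)
          ≤ ∑ i ∈ Finset.univ.filter (fun i : Fin l => (i:ℕ)+1 < l), N (ys i) := by
        have := Finset.sum_le_sum (s := Finset.univ.filter (fun i : Fin l => (i:ℕ)+1 < l))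
          (f := fun _ => ε/2) (g := fun i => N (ys i))
          (fun i hi => hlower i (Finset.mem_filter.mp hi).2)
        rw [Finset.sum_const, hcard, nsmul_eq_mul] at this
        have hc : ((l - 1 : ℕ) : ℝ) = (l:ℝ) - 1 := by
          have : 1 ≤ l := by omega
          push_cast [Nat.cast_sub this]; ring
        rwa [hc] at this
      linarith
    have heq : ((l : ℝ) - 1) / flog l * (ε / 2) = (flog l)⁻¹ * (((l:ℝ)-1) * (ε/2)) := by
      ring
    rw [heq]
    calc (flog l)⁻¹ * (((l:ℝ)-1) * (ε/2)) ≤ (flog l)⁻¹ * ∑ i, N (ys i) :=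
          mul_le_mul_of_nonneg_left hlowsum (le_of_lt (inv_pos.mpr hflogpos))
      _ ≤ 1 := hub
  · -- l ≤ 1
    have hnum : (l : ℝ) - 1 ≤ 0 := by
      have : l ≤ 1 := by omega
      have : (l:ℝ) ≤ 1 := by exact_mod_cast this
      linarith
    have hden : 0 ≤ flog l := by
      apply Real.logb_nonneg (by norm_num)
      have : (0:ℝ) ≤ (l:ℝ) := Nat.cast_nonneg l
      linarith
    have : ((l : ℝ) - 1) / flog l ≤ 0 := div_nonpos_of_nonpos_of_nonneg hnum hden
    nlinarith
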